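/- Let a : U X ⇸ X be a reflexive and transitive numerical relation and define δ : Set X → X → ℝ≥0∞ by δ A x = ⨅_{𝔵 ∈ U X, A ∈ 𝔵} a 𝔵 x. Then δ is an approach distance on X and its ultrafilter convergence equals a: for all 𝔵 ∈ U X and x ∈ X, ⨆_{A ∈ 𝔵} δ A x = a 𝔵 x. -/

import Mathlib

open scoped ENNReal
open CategoryTheory

noncomputable section

/-- The extension `Ū r` of a numerical relation `r : X ⇸ Y` to ultrafilters:
`Ū r (𝔵, 𝔶) = ⨆_{A ∈ 𝔵} ⨆_{B ∈ 𝔶} ⨅_{x ∈ A} ⨅_{y ∈ B} r x y`. -/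
def uExt {X Y : Type*} (r : X → Y → ℝ≥0∞) (𝔵 : Ultrafilter X) (𝔶 : Ultrafilter Y) : ℝ≥0∞ :=
  ⨆ A ∈ 𝔵, ⨆ B ∈ 𝔶, ⨅ x ∈ A, ⨅ y ∈ B, r x y

/-- The multiplication `m_X : U (U X) → U X` of the ultrafilter monad:
`m_X 𝔛 = {A ⊆ X | {𝔞 ∈ U X | A ∈ 𝔞} ∈ 𝔛}`. -/
def mU {X : Type*} (𝔛 : Ultrafilter (Ultrafilter X)) : Ultrafilter X :=
  𝔛.bind id

/-- `ξ : U [0,∞] → [0,∞]`, `ξ 𝔳 = ⨆_{A ∈ 𝔳} ⨅_{u ∈ A} u`. -/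
def xi (𝔳 : Ultrafilter ℝ≥0∞) : ℝ≥0∞ :=
  ⨆ A ∈ 𝔳, ⨅ u ∈ A, u

/-- `δ : P X × X → [0,∞]` is an approach distance. -/
structure IsApproachDistance {X : Type*} (δ : Set X → X → ℝ≥0∞) : Prop where
  dist_singleton : ∀ x : X, δ {x} x = 0
  dist_empty : ∀ x : X, δ (∅ : Set X) x = ∞
  dist_union : ∀ (A B : Set X) (x : X), δ (A ∪ B) x = min (δ A x) (δ B x)
  dist_closure : ∀ (A : Set X) (x : X) (ε : ℝ≥0∞), δ A x ≤ δ {y | δ A y ≤ ε} x + ε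

/-- The ultrafilter convergence associated to a distance function `δ`:
`a 𝔵 x = ⨆_{A ∈ 𝔵} δ A x`. -/
def appConv {X : Type*} (δ : Set X → X → ℝ≥0∞) (𝔵 : Ultrafilter X) (x : X) : ℝ≥0∞ :=
  ⨆ A ∈ 𝔵, δ A x

/-- `f : X → Y` is a contraction with respect to convergences `a` and `b`:
`a 𝔵 x ≥ b (U f 𝔵) (f x)`. -/
def IsContraction {X Y : Type*} (a : Ultrafilter X → X → ℝ≥0∞)
    (b : Ultrafilter Y → Y → ℝ≥0∞) (f : X → Y) : Prop :=
  ∀ (𝔵 : Ultrafilter X) (x : X), b (Ultrafilter.map f 𝔵) (f x) ≤ a 𝔵 x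

lemma mem_mU {X : Type*} {𝔛 : Ultrafilter (Ultrafilter X)} {A : Set X} :
    A ∈ mU 𝔛 ↔ {𝔷 : Ultrafilter X | A ∈ 𝔷} ∈ 𝔛 :=
  Filter.mem_bind'

/-- If `a : U X ⇸ X` is a reflexive and transitive numerical relation, then
`δ A x = ⨅_{𝔵 ∈ U X, A ∈ 𝔵} a 𝔵 x` is an approach distance on `X` whose ultrafilter
convergence is `a`. -/
theorem reflexive_transitive_gives_approach (X : Type*) (a : Ultrafilter X → X → ℝ≥0∞)
    (hrefl : ∀ x : X, a (pure x : Ultrafilter X) x = 0)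
    (htrans : ∀ (𝔛 : Ultrafilter (Ultrafilter X)) (𝔵 : Ultrafilter X) (x : X),
      a (mU 𝔛) x ≤ uExt a 𝔛 𝔵 + a 𝔵 x)
    (δ : Set X → X → ℝ≥0∞)
    (hδ : ∀ (A : Set X) (x : X), δ A x = ⨅ (𝔵 : Ultrafilter X) (_ : A ∈ 𝔵), a 𝔵 x) :
    IsApproachDistance δ ∧ ∀ (𝔵 : Ultrafilter X) (x : X), (⨆ A ∈ 𝔵, δ A x) = a 𝔵 x := by
  classical
  have hδle : ∀ (A : Set X) (𝔶 : Ultrafilter X), A ∈ 𝔶 → ∀ x, δ A x ≤ a 𝔶 x := by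
    intro A 𝔶 hA x
    rw [hδ]
    exact iInf₂_le 𝔶 hA
  have hexists : ∀ (A : Set X) (x : X) (c : ℝ≥0∞), δ A x < c →
      ∃ 𝔶 : Ultrafilter X, A ∈ 𝔶 ∧ a 𝔶 x < c := by
    intro A x c h
    rw [hδ] at h
    obtain ⟨𝔶, h⟩ := iInf_lt_iff.mp h
    obtain ⟨hA, h⟩ := iInf_lt_iff.mp h
    exact ⟨𝔶, hA, h⟩
  -- the convergence associated to δ is a
  have hconv : ∀ (𝔵 : Ultrafilter X) (x : X), (⨆ A ∈ 𝔵, δ A x) = a 𝔵 x := by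
    intro 𝔵 x
    refine le_antisymm (iSup₂_le fun A hA => hδle A 𝔵 hA x) ?_
    set c := ⨆ A ∈ 𝔵, δ A x with hc
    apply ENNReal.le_of_forall_pos_le_add
    intro ε hε hctop
    have hδc : ∀ A ∈ 𝔵, δ A x < c + ε := by
      intro A hA
      exact lt_of_le_of_lt (le_iSup₂ (f := fun A (_ : A ∈ 𝔵) => δ A x) A hA)
        (ENNReal.lt_add_right hctop.ne (by exact_mod_cast hε.ne'))
    set T : Set (Ultrafilter X) := {𝔷 | a 𝔷 x ≤ c + ε} with hT
    set F : Filter (Ultrafilter X) :=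
      ⨅ A : {A : Set X // A ∈ 𝔵}, Filter.principal ({𝔷 : Ultrafilter X | A.1 ∈ 𝔷} ∩ T) with hF
    have hne : F.NeBot := by
      haveI : Nonempty {A : Set X // A ∈ 𝔵} := ⟨⟨Set.univ, Filter.univ_mem⟩⟩
      apply Filter.iInf_neBot_of_directed'
      · rintro ⟨A, hA⟩ ⟨B, hB⟩
        refine ⟨⟨A ∩ B, Filter.inter_mem hA hB⟩, ?_, ?_⟩ <;>
        · apply Filter.principal_mono.mpr
          rintro 𝔷 ⟨h1, h2⟩
          exact ⟨Filter.mem_of_superset h1 (by intro z hz; first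
            | exact hz.1 | exact hz.2), h2⟩
      · rintro ⟨A, hA⟩
        rw [Filter.principal_neBot_iff]
        obtain ⟨𝔷, h𝔷A, h𝔷x⟩ := hexists A x (c + ε) (hδc A hA)
        exact ⟨𝔷, h𝔷A, h𝔷x.le⟩
    haveI := hne
    obtain ⟨𝔘, h𝔘⟩ := Ultrafilter.exists_le F
    have hmem : ∀ A ∈ 𝔵, {𝔷 : Ultrafilter X | A ∈ 𝔷} ∩ T ∈ 𝔘 := by
      intro A hA
      exact Filter.le_principal_iff.mp (h𝔘.trans (iInf_le (fun A : {A : Set X // A ∈ 𝔵} =>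
        Filter.principal ({𝔷 : Ultrafilter X | A.1 ∈ 𝔷} ∩ T)) ⟨A, hA⟩))
    have hle : (mU 𝔘 : Filter X) ≤ (𝔵 : Filter X) := by
      intro A hA
      exact mem_mU.mpr (Filter.mem_of_superset (hmem A hA) Set.inter_subset_left)
    have heq : mU 𝔘 = 𝔵 := Ultrafilter.coe_le_coe.mp hle
    have huext : uExt a 𝔘 (pure x) ≤ c + ε := by
      apply iSup₂_le; intro 𝒜 h𝒜
      apply iSup₂_le; intro B hB
      have hxB : x ∈ B := Ultrafilter.mem_pure.mp hB
      have hmem' : 𝒜 ∩ ({𝔷 : Ultrafilter X | Set.univ ∈ 𝔷} ∩ T) ∈ 𝔘 :=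
        Filter.inter_mem h𝒜 (hmem Set.univ Filter.univ_mem)
      obtain ⟨𝔷, h𝔷𝒜, -, h𝔷T⟩ := Ultrafilter.nonempty_of_mem hmem'
      calc (⨅ 𝔷' ∈ 𝒜, ⨅ y ∈ B, a 𝔷' y) ≤ ⨅ y ∈ B, a 𝔷 y := iInf₂_le 𝔷 h𝔷𝒜
        _ ≤ a 𝔷 x := iInf₂_le x hxB
        _ ≤ c + ε := h𝔷T
    calc a 𝔵 x = a (mU 𝔘) x := by rw [heq]
      _ ≤ uExt a 𝔘 (pure x) + a (pure x) x := htrans 𝔘 (pure x) x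
      _ = uExt a 𝔘 (pure x) := by rw [hrefl, add_zero]
      _ ≤ c + ε := huext
  -- the axioms
  have hsingle : ∀ x : X, δ {x} x = 0 := by
    intro x
    have h := hδle {x} (pure x) (Ultrafilter.mem_pure.mpr rfl) x
    rw [hrefl] at h
    exact le_antisymm h (zero_le)
  have hempty : ∀ x : X, δ (∅ : Set X) x = ∞ := by
    intro x
    rw [hδ]
    refine iInf_eq_top.mpr fun 𝔶 => iInf_eq_top.mpr fun h => absurd h ?_
    exact Ultrafilter.empty_notMem
  have hunion : ∀ (A B : Set X) (x : X), δ (A ∪ B) x = min (δ A x) (δ B x) := by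
    intro A B x
    refine le_antisymm (le_min ?_ ?_) ?_
    · rw [hδ (A ∪ B), hδ A]
      refine le_iInf₂ fun 𝔶 h => iInf₂_le 𝔶 (Filter.mem_of_superset h Set.subset_union_left)
    · rw [hδ (A ∪ B), hδ B]
      refine le_iInf₂ fun 𝔶 h => iInf₂_le 𝔶 (Filter.mem_of_superset h Set.subset_union_right)
    · rw [hδ (A ∪ B)]
      refine le_iInf₂ fun 𝔶 h => ?_
      rcases Ultrafilter.union_mem_iff.mp h with h' | h'
      · exact (min_le_left _ _).trans (hδle A 𝔶 h' x)
      · exact (min_le_right _ _).trans (hδle B 𝔶 h' x)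
  have hclosure : ∀ (A : Set X) (x : X) (ε : ℝ≥0∞), δ A x ≤ δ {y | δ A y ≤ ε} x + ε := by
    intro A x ε
    by_cases hεtop : ε = ⊤
    · simp [hεtop]
    rcases A.eq_empty_or_nonempty with rfl | ⟨a₀, ha₀⟩
    · have hset : {y : X | δ (∅ : Set X) y ≤ ε} = (∅ : Set X) := by
        ext y
        simp [hempty y, hεtop]
      rw [hset]
      exact le_self_add
    · apply ENNReal.le_of_forall_pos_le_add
      intro η hη hb
      set Aε : Set X := {y | δ A y ≤ ε} with hAε
      have hd : δ Aε x < ⊤ := lt_of_le_of_lt le_self_add hb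
      have hεlt : ε < ⊤ := lt_of_le_of_lt le_add_self hb
      set η2 : ℝ≥0∞ := (η : ℝ≥0∞) / 2 with hη2
      have hη2pos : (0 : ℝ≥0∞) < η2 := ENNReal.half_pos (by exact_mod_cast hη.ne')
      obtain ⟨𝔶, h𝔶Aε, h𝔶x⟩ := hexists Aε x (δ Aε x + η2)
        (ENNReal.lt_add_right hd.ne hη2pos.ne')
      have hex2 : ∀ y ∈ Aε, ∃ 𝔷 : Ultrafilter X, A ∈ 𝔷 ∧ a 𝔷 y < ε + η2 := fun y hy =>
        hexists A y (ε + η2) (lt_of_le_of_lt hy (ENNReal.lt_add_right hεlt.ne hη2pos.ne'))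
      set g : X → Ultrafilter X := fun y => if h : y ∈ Aε then (hex2 y h).choose else pure a₀
        with hg
      have hgA : ∀ y, A ∈ g y := by
        intro y
        rw [hg]
        dsimp only
        split
        · exact (hex2 y ‹_›).choose_spec.1
        · exact Ultrafilter.mem_pure.mpr ha₀
      have hga : ∀ y ∈ Aε, a (g y) y ≤ ε + η2 := by
        intro y hy
        rw [hg]
        dsimp only
        rw [dif_pos hy]
        exact ((hex2 y hy).choose_spec.2).le
      set 𝔛 : Ultrafilter (Ultrafilter X) := Ultrafilter.map g 𝔶 with h𝔛
      have hAmem : A ∈ mU 𝔛 := by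
        refine mem_mU.mpr ?_
        rw [h𝔛, Ultrafilter.mem_map]
        exact Filter.univ_mem' fun y => hgA y
      have huext : uExt a 𝔛 𝔶 ≤ ε + η2 := by
        apply iSup₂_le; intro 𝒜 h𝒜
        apply iSup₂_le; intro B hB
        have hmem' : g ⁻¹' 𝒜 ∩ (B ∩ Aε) ∈ 𝔶 :=
          Filter.inter_mem (Ultrafilter.mem_map.mp h𝒜) (Filter.inter_mem hB h𝔶Aε)
        obtain ⟨y, hy𝒜, hyB, hyAε⟩ := Ultrafilter.nonempty_of_mem hmem'
        calc (⨅ 𝔷 ∈ 𝒜, ⨅ z ∈ B, a 𝔷 z) ≤ ⨅ z ∈ B, a (g y) z := iInf₂_le (g y) hy𝒜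
          _ ≤ a (g y) y := iInf₂_le y hyB
          _ ≤ ε + η2 := hga y hyAε
      have hfinal : δ A x ≤ (ε + η2) + (δ Aε x + η2) :=
        calc δ A x ≤ a (mU 𝔛) x := hδle A (mU 𝔛) hAmem x
          _ ≤ uExt a 𝔛 𝔶 + a 𝔶 x := htrans 𝔛 𝔶 x
          _ ≤ (ε + η2) + (δ Aε x + η2) := add_le_add huext h𝔶x.le
      have hre : (ε + η2) + (δ Aε x + η2) = δ Aε x + ε + (η2 + η2) := by ring
      rw [hre, hη2, ENNReal.add_halves] at hfinal
      exact hfinal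
  exact ⟨⟨hsingle, hempty, hunion, hclosure⟩, hconv⟩

end
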